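/- For the lodgepole tree L_n, the number of root ancestral configurations is c(L_n) = 2^{n+1} − 2 and the number of labeled histories is h(L_n) = (2n−1)!! = 1·3·5···(2n−1). -/

import Mathlib

/-- Binary rooted trees (leaf labels abstracted away; leaves are identified
by their positions, encoded as lists of booleans). -/
inductive BTree : Type
  | leaf : BTree
  | node : BTree → BTree → BTree
  deriving DecidableEq

namespace BTree

/-- A position in a binary tree: a path from the root, `false` = left, `true` = right. -/
abbrev Pos := List Bool

/-- The subtree rooted at a position (junk value `leaf` below a leaf). -/
def subtreeAt : BTree → Pos → BTree
  | t, [] => t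
  | leaf, _ :: _ => leaf
  | node l _, false :: p => subtreeAt l p
  | node _ r, true :: p => subtreeAt r p

/-- `p` is a valid position (node) of the tree. -/
def isValidPos : BTree → Pos → Prop
  | _, [] => True
  | leaf, _ :: _ => False
  | node l _, false :: p => isValidPos l p
  | node _ r, true :: p => isValidPos r p

/-- The set of positions of the leaves of a tree. -/
def leafPositions : BTree → Finset Pos
  | leaf => {([] : Pos)}
  | node l r =>
      (leafPositions l).image (false :: ·) ∪ (leafPositions r).image (true :: ·)

/-- The number of leaves of a tree. -/
def numLeaves (t : BTree) : ℕ := (leafPositions t).card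

/-- The set of positions of the internal (non-leaf) nodes of a tree. -/
def internalPos : BTree → Finset Pos
  | leaf => ∅
  | node l r =>
      insert ([] : Pos)
        ((internalPos l).image (false :: ·) ∪ (internalPos r).image (true :: ·))

/-- A root ancestral configuration of `S`: an antichain of non-root nodes of `S`
whose descendant-leaf sets partition the leaf set, i.e. a set of valid non-root
positions such that every leaf position has exactly one weak ancestor in the set. -/
def IsConfig (S : BTree) (A : Finset Pos) : Prop :=
  (∀ p ∈ A, isValidPos S p ∧ p ≠ []) ∧
  ∀ q ∈ leafPositions S, ∃! p, p ∈ A ∧ p <+: q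

/-- The partial order on configurations: `ConfigLE A B` (that is, `A ≺ B`) iff `B`
is obtained from `A` by coalescing some (possibly no) pairs of lineages;
equivalently, every node of `A` is a weak descendant of some node of `B`. -/
def ConfigLE (A B : Finset Pos) : Prop :=
  ∀ p ∈ A, ∃ q ∈ B, q <+: p

/-- The covering relation on root ancestral configurations of `S`. -/
def Covers (S : BTree) (A B : Finset Pos) : Prop :=
  IsConfig S A ∧ IsConfig S B ∧ ConfigLE A B ∧ A ≠ B ∧
  ∀ C, IsConfig S C → ConfigLE A C → ConfigLE C B → C = A ∨ C = B

/-- The maximal root configuration: the two children of the root. -/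
def rootConfig : Finset Pos := {[false], [true]}

/-- The number of root ancestral configurations of `S`. -/
noncomputable def numConfigs (S : BTree) : ℕ := Nat.card {A : Finset Pos // IsConfig S A}

/-- A labeled history of `S`: a linear ordering of the internal nodes of `S`
in which every internal node appears after all of its internal descendants. -/
def IsLabHist (S : BTree) (L : List Pos) : Prop :=
  L.Nodup ∧ (∀ p, p ∈ L ↔ p ∈ internalPos S) ∧
  ∀ i j : Fin L.length, L.get i <+: L.get j → (j : ℕ) ≤ (i : ℕ)

/-- The number of labeled histories of `S`. -/
noncomputable def numHist (S : BTree) : ℕ := Nat.card {L : List Pos // IsLabHist S L}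

/-- The caterpillar tree on `n` leaves (`caterpillar 1` is a single leaf). -/
def caterpillar : ℕ → BTree
  | 0 => leaf
  | 1 => leaf
  | n + 2 => node (caterpillar (n + 1)) leaf

end BTree

open BTree

/-- The lodgepole trees: `L_0` is a single leaf and `L_n` has root subtrees
`L_{n-1}` and a cherry. -/
def lodgepole : ℕ → BTree
  | 0 => BTree.leaf
  | n + 1 => node (lodgepole n) (node BTree.leaf BTree.leaf)

section Aux
open List

lemma isValidPos_nil (t : BTree) : isValidPos t [] := by
  cases t <;> simp [isValidPos]

lemma exists_leaf_mem (t : BTree) : ∃ q, q ∈ leafPositions t := by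
  induction t with
  | leaf => exact ⟨[], by simp [leafPositions]⟩
  | node l r ihl ihr =>
      obtain ⟨q, hq⟩ := ihl
      exact ⟨false :: q, Finset.mem_union_left _ (Finset.mem_image_of_mem _ hq)⟩

lemma mem_leafPositions_node {l r : BTree} {q : Pos} :
    q ∈ leafPositions (node l r) ↔
      (∃ q', q' ∈ leafPositions l ∧ q = false :: q') ∨
      (∃ q', q' ∈ leafPositions r ∧ q = true :: q') := by
  simp [leafPositions, Finset.mem_union, Finset.mem_image, eq_comm]

lemma mem_internalPos_node {l r : BTree} {p : Pos} :
    p ∈ internalPos (node l r) ↔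
      p = [] ∨ (∃ q, q ∈ internalPos l ∧ p = false :: q) ∨
      (∃ q, q ∈ internalPos r ∧ p = true :: q) := by
  simp [internalPos, Finset.mem_union, Finset.mem_image, eq_comm]

lemma exists_leaf_of_valid (t : BTree) : ∀ (p : Pos), isValidPos t p →
    ∃ q ∈ leafPositions t, p <+: q := by
  induction t with
  | leaf =>
      intro p hp
      match p with
      | [] => exact ⟨[], by simp [leafPositions], List.nil_prefix⟩
      | _ :: _ => exact absurd hp (by simp [isValidPos])
  | node l r ihl ihr =>
      intro p hp
      match p with
      | [] =>
          obtain ⟨q, hq⟩ := exists_leaf_mem (node l r)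
          exact ⟨q, hq, List.nil_prefix⟩
      | false :: p' =>
          obtain ⟨q, hq, hpre⟩ := ihl p' hp
          exact ⟨false :: q, Finset.mem_union_left _ (Finset.mem_image_of_mem _ hq),
            List.cons_prefix_cons.mpr ⟨rfl, hpre⟩⟩
      | true :: p' =>
          obtain ⟨q, hq, hpre⟩ := ihr p' hp
          exact ⟨true :: q, Finset.mem_union_right _ (Finset.mem_image_of_mem _ hq),
            List.cons_prefix_cons.mpr ⟨rfl, hpre⟩⟩

lemma not_isConfig_leaf (A : Finset Pos) : ¬ IsConfig BTree.leaf A := by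
  rintro ⟨h1, h2⟩
  obtain ⟨p, ⟨hpA, hpre⟩, -⟩ := h2 [] (by simp [leafPositions])
  exact (h1 p hpA).2 (List.prefix_nil.mp hpre)

/-- A "pre-configuration": like a configuration but the root is allowed. -/
def IsPre (t : BTree) (A : Finset Pos) : Prop :=
  (∀ p ∈ A, isValidPos t p) ∧ ∀ q ∈ leafPositions t, ∃! p, p ∈ A ∧ p <+: q

lemma isPre_iff (t : BTree) (A : Finset Pos) :
    IsPre t A ↔ (A = {([] : Pos)} ∨ IsConfig t A) := by
  constructor
  · rintro ⟨hv, hc⟩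
    by_cases h0 : ([] : Pos) ∈ A
    · left
      apply Finset.eq_singleton_iff_unique_mem.mpr
      refine ⟨h0, fun p hp => ?_⟩
      obtain ⟨q, hq, hpre⟩ := exists_leaf_of_valid t p (hv p hp)
      obtain ⟨p₀, -, huniq⟩ := hc q hq
      rw [huniq p ⟨hp, hpre⟩, huniq [] ⟨h0, List.nil_prefix⟩]
    · right
      exact ⟨fun p hp => ⟨hv p hp, fun h => h0 (h ▸ hp)⟩, hc⟩
  · rintro (rfl | ⟨hv, hc⟩)
    · refine ⟨fun p hp => ?_, fun q hq => ⟨[], ⟨Finset.mem_singleton_self _, List.nil_prefix⟩, ?_⟩⟩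
      · rw [Finset.mem_singleton] at hp; subst hp; exact isValidPos_nil t
      · rintro p ⟨hp, -⟩; simpa using hp
    · exact ⟨fun p hp => (hv p hp).1, hc⟩

def push (b : Bool) (A : Finset Pos) : Finset Pos := A.image (b :: ·)

def unpush (b : Bool) (A : Finset Pos) : Finset Pos :=
  (A.filter (fun p => p.head? = some b)).image List.tail

lemma mem_push {b : Bool} {A : Finset Pos} {p : Pos} :
    p ∈ push b A ↔ ∃ q ∈ A, p = b :: q := by
  simp [push, Finset.mem_image, eq_comm]

lemma mem_unpush {b : Bool} {A : Finset Pos} {q : Pos} :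
    q ∈ unpush b A ↔ b :: q ∈ A := by
  simp only [unpush, Finset.mem_image, Finset.mem_filter]
  constructor
  · rintro ⟨p, ⟨hp, hh⟩, rfl⟩
    obtain ⟨ys, rfl⟩ := List.head?_eq_some_iff.mp hh
    exact hp
  · intro h
    exact ⟨b :: q, ⟨h, rfl⟩, rfl⟩

lemma isConfig_push_union {l r : BTree} {B C : Finset Pos}
    (hB : IsPre l B) (hC : IsPre r C) :
    IsConfig (node l r) (push false B ∪ push true C) := by
  constructor
  · intro p hp
    rcases Finset.mem_union.mp hp with hp | hp
    · obtain ⟨q, hq, rfl⟩ := mem_push.mp hp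
      exact ⟨hB.1 q hq, by simp⟩
    · obtain ⟨q, hq, rfl⟩ := mem_push.mp hp
      exact ⟨hC.1 q hq, by simp⟩
  · intro q hq
    rcases mem_leafPositions_node.mp hq with ⟨q', hq', rfl⟩ | ⟨q', hq', rfl⟩
    · obtain ⟨p', ⟨hp', hpre⟩, huniq⟩ := hB.2 q' hq'
      refine ⟨false :: p', ⟨Finset.mem_union_left _ (mem_push.mpr ⟨p', hp', rfl⟩),
        List.cons_prefix_cons.mpr ⟨rfl, hpre⟩⟩, ?_⟩
      rintro p ⟨hp, hpre2⟩
      rcases Finset.mem_union.mp hp with hp | hp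
      · obtain ⟨p₂, hp₂, rfl⟩ := mem_push.mp hp
        obtain ⟨-, hpre3⟩ := List.cons_prefix_cons.mp hpre2
        rw [huniq p₂ ⟨hp₂, hpre3⟩]
      · obtain ⟨p₂, hp₂, rfl⟩ := mem_push.mp hp
        exact absurd (List.cons_prefix_cons.mp hpre2).1 (by simp)
    · obtain ⟨p', ⟨hp', hpre⟩, huniq⟩ := hC.2 q' hq'
      refine ⟨true :: p', ⟨Finset.mem_union_right _ (mem_push.mpr ⟨p', hp', rfl⟩),
        List.cons_prefix_cons.mpr ⟨rfl, hpre⟩⟩, ?_⟩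
      rintro p ⟨hp, hpre2⟩
      rcases Finset.mem_union.mp hp with hp | hp
      · obtain ⟨p₂, hp₂, rfl⟩ := mem_push.mp hp
        exact absurd (List.cons_prefix_cons.mp hpre2).1 (by simp)
      · obtain ⟨p₂, hp₂, rfl⟩ := mem_push.mp hp
        obtain ⟨-, hpre3⟩ := List.cons_prefix_cons.mp hpre2
        rw [huniq p₂ ⟨hp₂, hpre3⟩]

lemma config_decomp {l r : BTree} {A : Finset Pos} (h : IsConfig (node l r) A) :
    IsPre l (unpush false A) ∧ IsPre r (unpush true A) ∧
      A = push false (unpush false A) ∪ push true (unpush true A) := by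
  obtain ⟨hv, hc⟩ := h
  have hpreL : IsPre l (unpush false A) := by
    constructor
    · intro q hq
      exact (hv _ (mem_unpush.mp hq)).1
    · intro q' hq'
      have hleaf : (false :: q') ∈ leafPositions (node l r) :=
        mem_leafPositions_node.mpr (Or.inl ⟨q', hq', rfl⟩)
      obtain ⟨p, ⟨hpA, hpre⟩, huniq⟩ := hc _ hleaf
      have hpne : p ≠ [] := (hv p hpA).2
      match p, hpne with
      | c :: p₂, _ =>
        obtain ⟨rfl, hpre2⟩ := List.cons_prefix_cons.mp hpre
        refine ⟨p₂, ⟨mem_unpush.mpr hpA, hpre2⟩, ?_⟩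
        rintro p₃ ⟨hp₃, hpre3⟩
        have := huniq (false :: p₃) ⟨mem_unpush.mp hp₃, List.cons_prefix_cons.mpr ⟨rfl, hpre3⟩⟩
        exact (List.cons.injEq _ _ _ _ ▸ this).2
  have hpreR : IsPre r (unpush true A) := by
    constructor
    · intro q hq
      exact (hv _ (mem_unpush.mp hq)).1
    · intro q' hq'
      have hleaf : (true :: q') ∈ leafPositions (node l r) :=
        mem_leafPositions_node.mpr (Or.inr ⟨q', hq', rfl⟩)
      obtain ⟨p, ⟨hpA, hpre⟩, huniq⟩ := hc _ hleaf
      have hpne : p ≠ [] := (hv p hpA).2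
      match p, hpne with
      | c :: p₂, _ =>
        obtain ⟨rfl, hpre2⟩ := List.cons_prefix_cons.mp hpre
        refine ⟨p₂, ⟨mem_unpush.mpr hpA, hpre2⟩, ?_⟩
        rintro p₃ ⟨hp₃, hpre3⟩
        have := huniq (true :: p₃) ⟨mem_unpush.mp hp₃, List.cons_prefix_cons.mpr ⟨rfl, hpre3⟩⟩
        exact (List.cons.injEq _ _ _ _ ▸ this).2
  refine ⟨hpreL, hpreR, ?_⟩
  ext p
  constructor
  · intro hp
    have hpne : p ≠ [] := (hv p hp).2
    match p, hpne with
    | false :: p₂, _ =>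
        exact Finset.mem_union_left _ (mem_push.mpr ⟨p₂, mem_unpush.mpr hp, rfl⟩)
    | true :: p₂, _ =>
        exact Finset.mem_union_right _ (mem_push.mpr ⟨p₂, mem_unpush.mpr hp, rfl⟩)
  · intro hp
    rcases Finset.mem_union.mp hp with hp | hp <;>
      · obtain ⟨q, hq, rfl⟩ := mem_push.mp hp
        exact mem_unpush.mp hq

end Aux

section Aux2
open List

lemma configs_leaf :
    Finite {A : Finset Pos // IsConfig BTree.leaf A} ∧ numConfigs BTree.leaf = 0 := by
  haveI : IsEmpty {A : Finset Pos // IsConfig BTree.leaf A} :=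
    ⟨fun x => not_isConfig_leaf x.1 x.2⟩
  exact ⟨inferInstance, Nat.card_of_isEmpty⟩

lemma card_pre (t : BTree) (hf : Finite {A : Finset Pos // IsConfig t A}) :
    Finite {A : Finset Pos // IsPre t A} ∧
      Nat.card {A : Finset Pos // IsPre t A} = numConfigs t + 1 := by
  haveI := hf
  haveI : Fintype {A : Finset Pos // IsConfig t A} := Fintype.ofFinite _
  let f : Option {A : Finset Pos // IsConfig t A} → {A : Finset Pos // IsPre t A} :=
    fun o => match o with
      | none => ⟨{[]}, (isPre_iff t _).mpr (Or.inl rfl)⟩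
      | some A => ⟨A.1, (isPre_iff t _).mpr (Or.inr A.2)⟩
  have hbij : Function.Bijective f := by
    constructor
    · rintro (_ | ⟨A, hA⟩) (_ | ⟨B, hB⟩) h
      · rfl
      · exfalso
        have : ({[]} : Finset Pos) = B := congrArg Subtype.val h
        exact (hB.1 [] (this ▸ Finset.mem_singleton_self _)).2 rfl
      · exfalso
        have : A = ({[]} : Finset Pos) := congrArg Subtype.val h
        exact (hA.1 [] (this ▸ Finset.mem_singleton_self _)).2 rfl
      · have : A = B := congrArg Subtype.val h
        subst this; rfl
    · rintro ⟨A, hA⟩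
      rcases (isPre_iff t A).mp hA with rfl | hc
      · exact ⟨none, rfl⟩
      · exact ⟨some ⟨A, hc⟩, rfl⟩
  refine ⟨Finite.of_surjective f hbij.2, ?_⟩
  rw [← Nat.card_eq_of_bijective f hbij]
  rw [Nat.card_eq_fintype_card, Fintype.card_option, ← Nat.card_eq_fintype_card]
  rfl

lemma configs_node (l r : BTree) (hl : Finite {A : Finset Pos // IsConfig l A})
    (hr : Finite {A : Finset Pos // IsConfig r A}) :
    Finite {A : Finset Pos // IsConfig (node l r) A} ∧
      numConfigs (node l r) = (numConfigs l + 1) * (numConfigs r + 1) := by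
  obtain ⟨hfl, hcl⟩ := card_pre l hl
  obtain ⟨hfr, hcr⟩ := card_pre r hr
  haveI := hfl; haveI := hfr
  let g : {B : Finset Pos // IsPre l B} × {C : Finset Pos // IsPre r C} →
      {A : Finset Pos // IsConfig (node l r) A} :=
    fun x => ⟨push false x.1.1 ∪ push true x.2.1, isConfig_push_union x.1.2 x.2.2⟩
  have hbij : Function.Bijective g := by
    constructor
    · rintro ⟨⟨B₁, hB₁⟩, ⟨C₁, hC₁⟩⟩ ⟨⟨B₂, hB₂⟩, ⟨C₂, hC₂⟩⟩ h
      have h' : push false B₁ ∪ push true C₁ = push false B₂ ∪ push true C₂ :=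
        congrArg Subtype.val h
      have hB : B₁ = B₂ := by
        ext q
        have : (false :: q ∈ push false B₁ ∪ push true C₁) ↔
            (false :: q ∈ push false B₂ ∪ push true C₂) := by rw [h']
        simpa [Finset.mem_union, mem_push] using this
      have hC : C₁ = C₂ := by
        ext q
        have : (true :: q ∈ push false B₁ ∪ push true C₁) ↔
            (true :: q ∈ push false B₂ ∪ push true C₂) := by rw [h']
        simpa [Finset.mem_union, mem_push] using this
      subst hB; subst hC; rfl
    · rintro ⟨A, hA⟩
      obtain ⟨h1, h2, h3⟩ := config_decomp hA
      exact ⟨⟨⟨unpush false A, h1⟩, ⟨unpush true A, h2⟩⟩, Subtype.ext h3.symm⟩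
  refine ⟨Finite.of_surjective g hbij.2, ?_⟩
  have := Nat.card_eq_of_bijective g hbij
  rw [Nat.card_prod, hcl, hcr] at this
  exact this.symm

end Aux2

section Aux3
open List

lemma isLabHist_iff (S : BTree) (L : List Pos) :
    IsLabHist S L ↔ L.Nodup ∧ (∀ p, p ∈ L ↔ p ∈ internalPos S) ∧
      L.Pairwise (fun a b => ¬ a <+: b) := by
  unfold IsLabHist
  refine and_congr_right fun _ => and_congr_right fun _ => ?_
  rw [List.pairwise_iff_get]
  constructor
  · intro h i j hij hpre
    have := h i j hpre
    rw [Fin.lt_def] at hij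
    omega
  · intro h i j hpre
    by_contra hc
    exact h i j (Fin.lt_def.mpr (by omega)) hpre

lemma hist_length {S : BTree} {L : List Pos} (h : IsLabHist S L) :
    L.length = (internalPos S).card := by
  obtain ⟨hnd, hmem, -⟩ := h
  have : L.toFinset = internalPos S := Finset.ext fun p => by
    simp [List.mem_toFinset, hmem p]
  rw [← this, List.toFinset_card_of_nodup hnd]

lemma pairwise_insertIdx {α : Type*} {R : α → α → Prop} {a : α} :
    ∀ (l : List α) (i : ℕ), i ≤ l.length → (∀ b ∈ l, R a b ∧ R b a) →
      (List.Pairwise R (List.insertIdx l i a) ↔ List.Pairwise R l) := by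
  intro l
  induction l with
  | nil =>
      intro i hi _
      have : i = 0 := by simp at hi; omega
      subst this
      simp
  | cons b l ih =>
      intro i hi hr
      cases i with
      | zero =>
          rw [List.insertIdx_zero, List.pairwise_cons]
          constructor
          · exact fun h => h.2
          · intro h
            exact ⟨fun c hc => (hr c hc).1, h⟩
      | succ i =>
          have hi' : i ≤ l.length := by simpa using hi
          rw [List.insertIdx_succ_cons, List.pairwise_cons, List.pairwise_cons,
            ih i hi' (fun c hc => hr c (List.mem_cons_of_mem _ hc))]
          constructor
          · rintro ⟨h1, h2⟩
            exact ⟨fun c hc => h1 c ((List.mem_insertIdx hi').mpr (Or.inr hc)), h2⟩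
          · rintro ⟨h1, h2⟩
            refine ⟨fun c hc => ?_, h2⟩
            rcases (List.mem_insertIdx hi').mp hc with rfl | hc
            · exact (hr b (List.mem_cons_self ..)).2
            · exact h1 c hc

lemma insertIdx_length_append {α : Type*} (l₁ l₂ : List α) (a : α) :
    List.insertIdx (l₁ ++ l₂) l₁.length a = l₁ ++ a :: l₂ := by
  induction l₁ with
  | nil => simp [List.insertIdx_zero]
  | cons b t ih => simp [List.insertIdx_succ_cons, ih]

lemma insertIdx_inj_idx {α : Type*} {a : α} {l₁ l₂ : List α}
    (h₁ : a ∉ l₁) (h₂ : a ∉ l₂) {i j : ℕ} (hi : i ≤ l₁.length) (hj : j ≤ l₂.length)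
    (h : List.insertIdx l₁ i a = List.insertIdx l₂ j a) : i = j := by
  rcases lt_trichotomy i j with hlt | heq | hlt
  · exfalso
    have hil : i < l₂.length := lt_of_lt_of_le hlt hj
    have e1 : (List.insertIdx l₁ i a)[i]'(by
        rw [List.length_insertIdx_of_le_length hi]; omega) = a :=
      List.getElem_insertIdx_self _
    have e2 : (List.insertIdx l₂ j a)[i]'(by
        rw [List.length_insertIdx_of_le_length hj]; omega) = l₂[i] :=
      List.getElem_insertIdx_of_lt hlt _
    have e3 : a = l₂[i] := by
      rw [← e2]
      conv_lhs => rw [← e1]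
      exact List.getElem_of_eq h _
    exact h₂ (e3 ▸ List.getElem_mem hil)
  · exact heq
  · exfalso
    have hil : j < l₁.length := lt_of_lt_of_le hlt hi
    have e1 : (List.insertIdx l₂ j a)[j]'(by
        rw [List.length_insertIdx_of_le_length hj]; omega) = a :=
      List.getElem_insertIdx_self _
    have e2 : (List.insertIdx l₁ i a)[j]'(by
        rw [List.length_insertIdx_of_le_length hi]; omega) = l₁[j] :=
      List.getElem_insertIdx_of_lt hlt _
    have e3 : a = l₁[j] := by
      rw [← e2]
      conv_lhs => rw [← e1]
      exact List.getElem_of_eq h.symm _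
    exact h₁ (e3 ▸ List.getElem_mem hil)

lemma internalPos_cherry : internalPos (node BTree.leaf BTree.leaf) = {([] : Pos)} := by
  simp [internalPos]

lemma false_cons_injective : Function.Injective (fun q : Pos => false :: q) :=
  fun a b h => by simpa using h

lemma encode_isLabHist (T : BTree) {K : List Pos} (hK : IsLabHist T K)
    {i : ℕ} (hi : i ≤ K.length) :
    IsLabHist (node T (node BTree.leaf BTree.leaf))
      (List.insertIdx (K.map (false :: ·)) i [true] ++ [([] : Pos)]) := by
  obtain ⟨hnd, hmem, hpw⟩ := (isLabHist_iff T K).mp hK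
  set M := List.insertIdx (K.map (false :: ·)) i [true] with hM
  have hlen : i ≤ (K.map (false :: ·)).length := by simpa using hi
  have hperm : M.Perm ([true] :: K.map (false :: ·)) := List.perm_insertIdx _ _ hlen
  have hmemM : ∀ p : Pos, p ∈ M ↔ p = [true] ∨ ∃ q, q ∈ K ∧ p = false :: q := by
    intro p
    rw [hperm.mem_iff]
    simp [List.mem_map, eq_comm]
  rw [isLabHist_iff]
  refine ⟨?_, ?_, ?_⟩
  · rw [List.nodup_append]
    refine ⟨?_, List.nodup_singleton _, ?_⟩
    · rw [hperm.nodup_iff, List.nodup_cons]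
      constructor
      · intro hmem'
        obtain ⟨q, hq, h⟩ := List.mem_map.mp hmem'
        simp at h
      · exact hnd.map false_cons_injective
    · intro p hp b hp' hpb
      rw [List.mem_singleton] at hp'
      subst hp'
      subst hpb
      rcases (hmemM []).mp hp with h | ⟨q, hq, h⟩ <;> simp at h
  · intro p
    rw [List.mem_append, hmemM p, mem_internalPos_node, internalPos_cherry]
    simp only [List.mem_singleton, Finset.mem_singleton]
    constructor
    · rintro ((rfl | ⟨q, hq, rfl⟩) | rfl)
      · exact Or.inr (Or.inr ⟨[], rfl, rfl⟩)
      · exact Or.inr (Or.inl ⟨q, (hmem q).mp hq, rfl⟩)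
      · exact Or.inl rfl
    · rintro (rfl | ⟨q, hq, rfl⟩ | ⟨q, rfl, rfl⟩)
      · exact Or.inr rfl
      · exact Or.inl (Or.inr ⟨q, (hmem q).mpr hq, rfl⟩)
      · exact Or.inl (Or.inl rfl)
  · rw [List.pairwise_append]
    refine ⟨?_, List.pairwise_singleton _ _, ?_⟩
    · rw [pairwise_insertIdx _ i hlen ?_]
      · rw [List.pairwise_map]
        exact hpw.imp fun h hpre => h (List.cons_prefix_cons.mp hpre).2
      · intro b hb
        obtain ⟨q, hq, rfl⟩ := List.mem_map.mp hb
        constructor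
        · intro hpre
          exact absurd (List.cons_prefix_cons.mp hpre).1 (by simp)
        · intro hpre
          exact absurd (List.cons_prefix_cons.mp hpre).1 (by simp)
    · intro p hp b hb
      rw [List.mem_singleton] at hb
      subst hb
      intro hpre
      have := List.prefix_nil.mp hpre
      subst this
      rcases (hmemM []).mp hp with h | ⟨q, hq, h⟩ <;> simp at h

end Aux3

section Aux4
open List

lemma true_cons_injective : Function.Injective (fun q : Pos => true :: q) :=
  fun a b h => by simpa using h

lemma hists_leaf : Finite {L : List Pos // IsLabHist BTree.leaf L} ∧
    numHist BTree.leaf = 1 := by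
  have h0 : IsLabHist BTree.leaf [] := by
    rw [isLabHist_iff]
    exact ⟨List.nodup_nil, fun p => by simp [internalPos], List.Pairwise.nil⟩
  haveI : Unique {L : List Pos // IsLabHist BTree.leaf L} :=
    { default := ⟨[], h0⟩
      uniq := fun x => Subtype.ext (by
        show x.1 = []
        rw [List.eq_nil_iff_forall_not_mem]
        intro p hp
        have := (((isLabHist_iff _ _).mp x.2).2.1 p).mp hp
        simp [internalPos] at this) }
  exact ⟨inferInstance, Nat.card_unique⟩

lemma hists_node_cherry (T : BTree) (hT : Finite {L : List Pos // IsLabHist T L}) :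
    Finite {L : List Pos // IsLabHist (node T (node BTree.leaf BTree.leaf)) L} ∧
      numHist (node T (node BTree.leaf BTree.leaf)) =
        ((internalPos T).card + 1) * numHist T := by
  haveI := hT
  let g : Fin ((internalPos T).card + 1) × {K : List Pos // IsLabHist T K} →
      {L : List Pos // IsLabHist (node T (node BTree.leaf BTree.leaf)) L} :=
    fun x => ⟨List.insertIdx (x.2.1.map (false :: ·)) x.1 [true] ++ [([] : Pos)],
      encode_isLabHist T x.2.2 (by rw [hist_length x.2.2]; exact Nat.lt_succ_iff.mp x.1.isLt)⟩
  have hnotin : ∀ K : List Pos, ([true] : Pos) ∉ K.map (false :: ·) := by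
    intro K hmem'
    obtain ⟨q, -, hq⟩ := List.mem_map.mp hmem'
    simp at hq
  have hbij : Function.Bijective g := by
    constructor
    · rintro ⟨i₁, ⟨K₁, hK₁⟩⟩ ⟨i₂, ⟨K₂, hK₂⟩⟩ h
      have h' : List.insertIdx (K₁.map (false :: ·)) i₁ [true] =
          List.insertIdx (K₂.map (false :: ·)) i₂ [true] :=
        List.append_cancel_right (congrArg Subtype.val h)
      have hi₁ : (i₁ : ℕ) ≤ (K₁.map (false :: ·)).length := by
        rw [List.length_map, hist_length hK₁]; exact Nat.lt_succ_iff.mp i₁.isLt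
      have hi₂ : (i₂ : ℕ) ≤ (K₂.map (false :: ·)).length := by
        rw [List.length_map, hist_length hK₂]; exact Nat.lt_succ_iff.mp i₂.isLt
      have hij : (i₁ : ℕ) = (i₂ : ℕ) :=
        insertIdx_inj_idx (hnotin K₁) (hnotin K₂) hi₁ hi₂ h'
      have hiF : i₁ = i₂ := Fin.ext hij
      subst hiF
      have h'' := congrArg (fun L => List.eraseIdx L (i₁ : ℕ)) h'
      simp only [List.eraseIdx_insertIdx_self] at h''
      have hK : K₁ = K₂ := List.map_injective_iff.mpr false_cons_injective h''
      rw [Prod.mk.injEq]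
      exact ⟨rfl, Subtype.ext hK⟩
    · rintro ⟨L, hL⟩
      obtain ⟨hnd, hmem, hpw⟩ := (isLabHist_iff _ L).mp hL
      have hnil : ([] : Pos) ∈ L := (hmem []).mpr (mem_internalPos_node.mpr (Or.inl rfl))
      have hLne : L ≠ [] := fun h => by simp [h] at hnil
      have hsplit : L.dropLast ++ [L.getLast hLne] = L := List.dropLast_append_getLast hLne
      set M := L.dropLast with hMdef
      have hlast : L.getLast hLne = [] := by
        by_contra hne
        have h0 : ([] : Pos) ∈ M := by
          rw [← hsplit] at hnil
          rcases List.mem_append.mp hnil with h | h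
          · exact h
          · rw [List.mem_singleton] at h; exact absurd h.symm hne
        have hpw' : List.Pairwise (fun a b : Pos => ¬ a <+: b) (M ++ [L.getLast hLne]) :=
          hsplit.symm ▸ hpw
        exact (List.pairwise_append.mp hpw').2.2 [] h0 _ (List.mem_singleton_self _)
          List.nil_prefix
      rw [hlast] at hsplit
      have hndM : (M ++ [([] : Pos)]).Nodup := hsplit.symm ▸ hnd
      rw [List.nodup_append] at hndM
      obtain ⟨hndM', -, hdisj⟩ := hndM
      have hnilM : ([] : Pos) ∉ M := fun h => hdisj _ h _ (List.mem_singleton_self _) rfl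
      have hmemM : ∀ p : Pos, p ∈ M ↔
          (p ∈ internalPos (node T (node BTree.leaf BTree.leaf)) ∧ p ≠ []) := by
        intro p
        constructor
        · intro hp
          refine ⟨(hmem p).mp (by rw [← hsplit]; exact List.mem_append_left _ hp), ?_⟩
          rintro rfl; exact hnilM hp
        · rintro ⟨hp, hne⟩
          have hmem2 := (hmem p).mpr hp
          rw [← hsplit] at hmem2
          rcases List.mem_append.mp hmem2 with h | h
          · exact h
          · rw [List.mem_singleton] at h; exact absurd h hne
      have hpwM : List.Pairwise (fun a b : Pos => ¬ a <+: b) M :=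
        (List.pairwise_append.mp (hsplit.symm ▸ hpw)).1
      have htrue : ([true] : Pos) ∈ M :=
        (hmemM [true]).mpr ⟨mem_internalPos_node.mpr (Or.inr (Or.inr
          ⟨[], by rw [internalPos_cherry]; exact Finset.mem_singleton_self _, rfl⟩)),
          by simp⟩
      obtain ⟨M₁, M₂, hM⟩ := List.append_of_mem htrue
      have hsub : (M₁ ++ M₂).Sublist M := by
        rw [hM]; exact (List.sublist_cons_self _ M₂).append_left M₁
      have hndM12 : (M₁ ++ M₂).Nodup := List.Nodup.sublist hsub hndM'
      have htrue12 : ([true] : Pos) ∉ M₁ ++ M₂ := by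
        have hndM'' : (M₁ ++ ([true] : Pos) :: M₂).Nodup := hM ▸ hndM'
        rw [List.nodup_append] at hndM''
        obtain ⟨-, hnd2, hdisj2⟩ := hndM''
        rw [List.nodup_cons] at hnd2
        rw [List.mem_append]
        rintro (h | h)
        · exact hdisj2 _ h _ (List.mem_cons_self ..) rfl
        · exact hnd2.1 h
      have hform : ∀ p ∈ M₁ ++ M₂, ∃ q, q ∈ internalPos T ∧ p = false :: q := by
        intro p hp
        have hpM : p ∈ M := hsub.subset hp
        obtain ⟨hpint, hpne⟩ := (hmemM p).mp hpM
        rcases mem_internalPos_node.mp hpint with rfl | ⟨q, hq, rfl⟩ | ⟨q, hq, rfl⟩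
        · exact absurd rfl hpne
        · exact ⟨q, hq, rfl⟩
        · exfalso
          rw [internalPos_cherry, Finset.mem_singleton] at hq
          subst hq
          exact htrue12 hp
      set K := (M₁ ++ M₂).map List.tail with hKdef
      have hmapK : K.map (false :: ·) = M₁ ++ M₂ := by
        rw [hKdef, List.map_map]
        have hcongr : ∀ p ∈ M₁ ++ M₂, ((fun q : Pos => false :: q) ∘ List.tail) p = id p := by
          intro p hp
          obtain ⟨q, -, rfl⟩ := hform p hp
          rfl
        rw [List.map_congr_left hcongr, List.map_id]
      have hKhist : IsLabHist T K := by
        rw [isLabHist_iff]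
        refine ⟨?_, ?_, ?_⟩
        · apply List.Nodup.map_on ?_ hndM12
          intro x hx y hy hxy
          obtain ⟨qx, -, rfl⟩ := hform x hx
          obtain ⟨qy, -, rfl⟩ := hform y hy
          simp only [List.tail_cons] at hxy
          rw [hxy]
        · intro q
          constructor
          · intro hq
            obtain ⟨p, hp, rfl⟩ := List.mem_map.mp hq
            obtain ⟨q', hq', rfl⟩ := hform p hp
            simpa using hq'
          · intro hq
            have hpint : (false :: q) ∈ internalPos (node T (node BTree.leaf BTree.leaf)) :=
              mem_internalPos_node.mpr (Or.inr (Or.inl ⟨q, hq, rfl⟩))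
            have hpM : (false :: q) ∈ M := (hmemM _).mpr ⟨hpint, by simp⟩
            rw [hM] at hpM
            have hp12 : (false :: q) ∈ M₁ ++ M₂ := by
              rcases List.mem_append.mp hpM with h | h
              · exact List.mem_append_left _ h
              · rcases List.mem_cons.mp h with h | h
                · simp at h
                · exact List.mem_append_right _ h
            exact List.mem_map.mpr ⟨false :: q, hp12, rfl⟩
        · have hpw12 : List.Pairwise (fun a b : Pos => ¬ a <+: b) (M₁ ++ M₂) :=
            List.Pairwise.sublist hsub hpwM
          refine List.pairwise_map.mpr ?_
          refine List.Pairwise.imp_of_mem ?_ hpw12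
          intro a b ha hb hab hpre
          obtain ⟨qa, -, rfl⟩ := hform a ha
          obtain ⟨qb, -, rfl⟩ := hform b hb
          exact hab (List.cons_prefix_cons.mpr ⟨rfl, by simpa using hpre⟩)
      have hKlen : K.length = (internalPos T).card := hist_length hKhist
      have hilen : M₁.length ≤ (internalPos T).card := by
        rw [← hKlen, hKdef, List.length_map, List.length_append]; omega
      refine ⟨⟨⟨M₁.length, Nat.lt_succ_of_le hilen⟩, ⟨K, hKhist⟩⟩, ?_⟩
      apply Subtype.ext
      show List.insertIdx (K.map (false :: ·)) M₁.length [true] ++ [([] : Pos)] = L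
      rw [hmapK, insertIdx_length_append, ← hM, hsplit]
  refine ⟨Finite.of_surjective g hbij.2, ?_⟩
  have hcard := Nat.card_eq_of_bijective g hbij
  rw [Nat.card_prod] at hcard
  have hfin : Nat.card (Fin ((internalPos T).card + 1)) = (internalPos T).card + 1 :=
    Nat.card_eq_fintype_card.trans (Fintype.card_fin _)
  rw [hfin] at hcard
  exact hcard.symm

lemma card_internalPos_node (l r : BTree) :
    (internalPos (node l r)).card = (internalPos l).card + (internalPos r).card + 1 := by
  have hnot : ([] : Pos) ∉
      (internalPos l).image (false :: ·) ∪ (internalPos r).image (true :: ·) := by simp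
  have hdisj : Disjoint ((internalPos l).image (false :: ·))
      ((internalPos r).image (true :: ·)) := by
    rw [Finset.disjoint_left]
    intro p hp hp'
    obtain ⟨q, -, rfl⟩ := Finset.mem_image.mp hp
    obtain ⟨q', -, h⟩ := Finset.mem_image.mp hp'
    simp at h
  rw [show internalPos (node l r) = insert ([] : Pos)
      ((internalPos l).image (false :: ·) ∪ (internalPos r).image (true :: ·)) from rfl]
  rw [Finset.card_insert_of_notMem hnot, Finset.card_union_of_disjoint hdisj,
    Finset.card_image_of_injective _ false_cons_injective,
    Finset.card_image_of_injective _ true_cons_injective]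

lemma card_internal_lodgepole : ∀ n : ℕ, (internalPos (lodgepole n)).card = 2 * n
  | 0 => by simp [lodgepole, internalPos]
  | n + 1 => by
      show (internalPos (node (lodgepole n) (node BTree.leaf BTree.leaf))).card = _
      rw [card_internalPos_node, card_internal_lodgepole n, card_internalPos_node]
      have h : (internalPos BTree.leaf).card = 0 := by simp [internalPos]
      rw [h]
      omega

lemma lodgepole_aux (n : ℕ) :
    (Finite {A : Finset Pos // IsConfig (lodgepole n) A} ∧
      Finite {L : List Pos // IsLabHist (lodgepole n) L}) ∧
    numConfigs (lodgepole n) = 2 ^ (n + 1) - 2 ∧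
    numHist (lodgepole n) = ∏ i ∈ Finset.range n, (2 * i + 1) := by
  induction n with
  | zero =>
      refine ⟨⟨configs_leaf.1, hists_leaf.1⟩, ?_, ?_⟩
      · rw [show lodgepole 0 = BTree.leaf from rfl, configs_leaf.2]
        norm_num
      · rw [show lodgepole 0 = BTree.leaf from rfl, hists_leaf.2]
        simp
  | succ n ih =>
      obtain ⟨⟨fc, fh⟩, hc, hh⟩ := ih
      have hcherry := configs_node BTree.leaf BTree.leaf configs_leaf.1 configs_leaf.1
      have hC := configs_node (lodgepole n) (node BTree.leaf BTree.leaf) fc hcherry.1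
      have hH := hists_node_cherry (lodgepole n) fh
      have hstep : lodgepole (n + 1) = node (lodgepole n) (node BTree.leaf BTree.leaf) := rfl
      refine ⟨⟨hstep ▸ hC.1, hstep ▸ hH.1⟩, ?_, ?_⟩
      · rw [hstep, hC.2, hcherry.2, configs_leaf.2, hc]
        have h2 : 2 ≤ 2 ^ (n + 1) := by
          have := Nat.pow_le_pow_right (show 1 ≤ 2 by norm_num) (show 1 ≤ n + 1 by omega)
          simpa using this
        rw [pow_succ 2 (n + 1)]
        omega
      · rw [hstep, hH.2, hh, card_internal_lodgepole n, Finset.prod_range_succ]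
        ring

end Aux4

/-- For the lodgepole tree `L_n`, the number of root ancestral configurations is
`2^{n+1} - 2` and the number of labeled histories is
`(2n-1)!! = 1 * 3 * 5 * ⋯ * (2n-1)`. -/
theorem lodgepole_counts (n : ℕ) (hn : 1 ≤ n) :
    numConfigs (lodgepole n) = 2 ^ (n + 1) - 2 ∧
    numHist (lodgepole n) = ∏ i ∈ Finset.range n, (2 * i + 1) := by
  exact ⟨(lodgepole_aux n).2.1, (lodgepole_aux n).2.2⟩
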